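/- The distribution-based inconsistency measure I_D satisfies Free Formula Independence: if α is a free formula of K ∪ {α} (i.e., α belongs to no minimal unsatisfiable subset of K ∪ {α}), then I_D(K ∪ {α}) = I_D(K). -/
import Mathlib


inductive PropForm (V : Type) : Type
  | var : V → PropForm V
  | neg : PropForm V → PropForm V
  | conj : PropForm V → PropForm V → PropForm V
  | disj : PropForm V → PropForm V → PropForm V
  deriving DecidableEq

namespace PropForm
def eval {V : Type} (v : V → Bool) : PropForm V → Bool
  | var p => v p
  | neg f => !(eval v f)
  | conj f g => eval v f && eval v g
  | disj f g => eval v f || eval v g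
end PropForm

/-- A finite knowledge base `K` is satisfiable (consistent) if some valuation makes
all its formulas true. -/
def Sat {V : Type} (K : Finset (PropForm V)) : Prop :=
  ∃ v : V → Bool, ∀ f ∈ K, f.eval v = true

/-- `M` is a minimal unsatisfiable set: inconsistent, with every proper subset consistent. -/
def IsMUS {V : Type} (M : Finset (PropForm V)) : Prop :=
  ¬ Sat M ∧ ∀ M' ⊂ M, Sat M'

/-- The set of minimal unsatisfiable subsets of `K`. -/
def MUSes {V : Type} (K : Finset (PropForm V)) : Set (Finset (PropForm V)) :=
  {M | M ⊆ K ∧ IsMUS M}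

/-- A partial MUS-decomposition of `K`: a family of pairwise-disjoint inconsistent
subsets of `K` such that the MUSes of their union are exactly the disjoint union of
the MUSes of the components. -/
def IsPartialMUSdecomp {V : Type} [DecidableEq V] (K : Finset (PropForm V))
    (T : Finset (Finset (PropForm V))) : Prop :=
  (∀ Ki ∈ T, Ki ⊆ K ∧ ¬ Sat Ki) ∧
  (↑T : Set (Finset (PropForm V))).PairwiseDisjoint id ∧
  MUSes (T.sup id) = ⋃ Ki ∈ T, MUSes Ki ∧
  (↑T : Set (Finset (PropForm V))).Pairwise fun A B => Disjoint (MUSes A) (MUSes B)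

/-- The distribution index: maximal cardinality of a partial MUS-decomposition. -/
noncomputable def muD {V : Type} [DecidableEq V] (K : Finset (PropForm V)) : ℕ :=
  sSup {n : ℕ | ∃ T : Finset (Finset (PropForm V)), IsPartialMUSdecomp K T ∧ T.card = n}

open Classical in
/-- The distribution-based inconsistency measure. -/
noncomputable def ID {V : Type} [DecidableEq V] (K : Finset (PropForm V)) : ℕ :=
  if Sat K then 0 else muD K

lemma sat_mono {V : Type} {S T : Finset (PropForm V)} (h : S ⊆ T) (hT : Sat T) : Sat S := by
  obtain ⟨v, hv⟩ := hT
  exact ⟨v, fun f hf => hv f (h hf)⟩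

lemma sat_empty {V : Type} : Sat (∅ : Finset (PropForm V)) :=
  ⟨fun _ => true, by simp⟩

lemma exists_mus {V : Type} : ∀ (S : Finset (PropForm V)), ¬ Sat S → ∃ M ⊆ S, IsMUS M := by
  classical
  intro S
  induction S using Finset.strongInduction with
  | _ S ih =>
    intro h
    by_cases hall : ∀ S' ⊂ S, Sat S'
    · exact ⟨S, subset_rfl, h, hall⟩
    · push_neg at hall
      obtain ⟨S', hss, hS'⟩ := hall
      obtain ⟨M, hM, hmus⟩ := ih S' hss hS'
      exact ⟨M, hM.trans hss.subset, hmus⟩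

lemma muses_mono {V : Type} {A B : Finset (PropForm V)} (h : A ⊆ B) :
    MUSes A ⊆ MUSes B := fun M hM => ⟨hM.1.trans h, hM.2⟩

theorem stmt13 {V : Type} [DecidableEq V] (K : Finset (PropForm V)) (α : PropForm V)
    (hfree : ∀ M ∈ MUSes (insert α K), α ∉ M) :
    ID (insert α K) = ID K := by
  classical
  -- α alone is satisfiable
  have hαsat : Sat ({α} : Finset (PropForm V)) := by
    by_contra h
    obtain ⟨M, hMsub, hmus⟩ := exists_mus _ h
    have hMne : M ≠ ∅ := by rintro rfl; exact hmus.1 sat_empty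
    have hαM : α ∈ M := by
      obtain ⟨x, hx⟩ := Finset.nonempty_iff_ne_empty.mpr hMne
      have := hMsub hx; simp at this; subst this; exact hx
    exact hfree M ⟨hMsub.trans (by simp [Finset.singleton_subset_iff]), hmus⟩ hαM
  -- MUSes of any subset of insert α K avoid α
  have hfree' : ∀ A ⊆ insert α K, ∀ M ∈ MUSes A, α ∉ M := by
    intro A hA M hM
    exact hfree M (muses_mono hA hM)
  have muses_erase : ∀ A ⊆ insert α K, MUSes (A.erase α) = MUSes A := by
    intro A hA
    apply Set.Subset.antisymm (muses_mono (Finset.erase_subset _ _))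
    intro M hM
    exact ⟨fun x hx => Finset.mem_erase.mpr ⟨fun e => hfree' A hA M hM (e ▸ hx), hM.1 hx⟩, hM.2⟩
  have unsat_erase : ∀ A ⊆ insert α K, ¬ Sat A → ¬ Sat (A.erase α) := by
    intro A hA hunsat hsat
    obtain ⟨M, hMsub, hmus⟩ := exists_mus _ hunsat
    have hαM : α ∉ M := hfree' A hA M ⟨hMsub, hmus⟩
    have : M ⊆ A.erase α := fun x hx => Finset.mem_erase.mpr ⟨fun e => hαM (e ▸ hx), hMsub hx⟩
    exact hmus.1 (sat_mono this hsat)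
  have satIff : Sat (insert α K) ↔ Sat K := by
    constructor
    · exact fun h => sat_mono (Finset.subset_insert _ _) h
    · intro hK
      by_contra hI
      obtain ⟨M, hMsub, hmus⟩ := exists_mus _ hI
      have hαM : α ∉ M := hfree M ⟨hMsub, hmus⟩
      have hMK : M ⊆ K := fun x hx =>
        (Finset.mem_insert.mp (hMsub hx)).resolve_left (fun e => hαM (e ▸ hx))
      exact hmus.1 (sat_mono hMK hK)
  by_cases hK : Sat K
  · simp [ID, hK, satIff.mpr hK]
  · have hI : ¬ Sat (insert α K) := fun h => hK (satIff.mp h)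
    simp only [ID, if_neg hK, if_neg hI]
    -- show muD equal by showing the decomposition-cardinality sets are equal
    unfold muD
    congr 1
    ext n
    constructor
    · rintro ⟨T, hT, rfl⟩
      obtain ⟨h1, h2, h3, h4⟩ := hT
      -- erase α from every component
      set f : Finset (PropForm V) → Finset (PropForm V) := fun A => A.erase α with hf
      have hinj : Set.InjOn f ↑T := by
        intro A hA B hB hAB
        by_contra hne
        have hdisj : Disjoint A B := h2 hA hB hne
        have hAe : A.erase α = ∅ := by
          apply Finset.eq_empty_of_forall_notMem
          intro x hx
          have hxB : x ∈ B := Finset.erase_subset _ _ (by rw [show B.erase α = A.erase α from hAB.symm]; exact hx)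
          exact (Finset.disjoint_left.mp hdisj (Finset.erase_subset _ _ hx)) hxB
        have hAsub : A ⊆ {α} := by
          intro x hx
          simp only [Finset.mem_singleton]
          by_contra hxα
          have : x ∈ A.erase α := Finset.mem_erase.mpr ⟨hxα, hx⟩
          simp [hAe] at this
        exact (h1 A hA).2 (sat_mono hAsub hαsat)
      have hsubK : ∀ A ∈ T, A ⊆ insert α K := fun A hA => (h1 A hA).1
      have hsup_sub : T.sup id ⊆ insert α K :=
        Finset.sup_le fun A hA => hsubK A hA
      have hsup_eq : (T.image f).sup id = (T.sup id).erase α := by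
        ext x
        simp only [Finset.mem_sup, Finset.mem_image, Finset.mem_erase, id, hf]
        constructor
        · rintro ⟨B, ⟨A, hA, rfl⟩, hx⟩
          rw [Finset.mem_erase] at hx
          exact ⟨hx.1, A, hA, hx.2⟩
        · rintro ⟨hxα, A, hA, hx⟩
          exact ⟨A.erase α, ⟨A, hA, rfl⟩, Finset.mem_erase.mpr ⟨hxα, hx⟩⟩
      refine ⟨T.image f, ⟨?_, ?_, ?_, ?_⟩, Finset.card_image_of_injOn hinj⟩
      · rintro B hB
        obtain ⟨A, hA, rfl⟩ := Finset.mem_image.mp hB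
        refine ⟨?_, unsat_erase A (hsubK A hA) (h1 A hA).2⟩
        intro x hx
        rw [Finset.mem_erase] at hx
        exact (Finset.mem_insert.mp (hsubK A hA hx.2)).resolve_left hx.1
      · intro a ha b hb hab
        simp only [Finset.coe_image, Set.mem_image, Finset.mem_coe] at ha hb
        obtain ⟨A, hA, rfl⟩ := ha
        obtain ⟨B, hB, rfl⟩ := hb
        have hne : A ≠ B := fun e => hab (by rw [e])
        exact (h2 hA hB hne).mono (Finset.erase_subset _ _) (Finset.erase_subset _ _)
      · rw [hsup_eq, muses_erase _ hsup_sub, h3]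
        ext M
        simp only [Set.mem_iUnion, Finset.mem_image, exists_prop]
        constructor
        · rintro ⟨A, hA, hM⟩
          exact ⟨A.erase α, ⟨A, hA, rfl⟩, (muses_erase A (hsubK A hA)).symm ▸ hM⟩
        · rintro ⟨B, ⟨A, hA, rfl⟩, hM⟩
          exact ⟨A, hA, (muses_erase A (hsubK A hA)) ▸ hM⟩
      · intro a ha b hb hab
        simp only [Finset.coe_image, Set.mem_image, Finset.mem_coe] at ha hb
        obtain ⟨A, hA, rfl⟩ := ha
        obtain ⟨B, hB, rfl⟩ := hb
        have hne : A ≠ B := fun e => hab (by rw [e])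
        rw [muses_erase A (hsubK A hA), muses_erase B (hsubK B hB)]
        exact h4 hA hB hne
    · rintro ⟨T, hT, rfl⟩
      obtain ⟨h1, h2, h3, h4⟩ := hT
      exact ⟨T, ⟨fun Ki hKi => ⟨(h1 Ki hKi).1.trans (Finset.subset_insert _ _), (h1 Ki hKi).2⟩,
        h2, h3, h4⟩, rfl⟩
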